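/- arXiv:1101.2647 — 3 statements merged into one kernel-verified Lean document; each statement's English description precedes it below -/
import Mathlib

section
/- Let K be a field, l ≥ 1, and let θ_1, …, θ_l ∈ K be pairwise distinct. Writing θ_{jk} := θ_j − θ_k, the following identity holds: ∏_{j=1}^{l−1} (θ_{jl} − 1)/θ_{jl} + Σ_{k=1}^{l−1} (1/θ_{kl}) · ∏_{j=1, j≠k}^{l−1} (θ_{jk} − 1)/θ_{jk} = 1. (This expresses that the sum of the coefficients in the expansion of t_l through the new generators t°_k in the diagonal reduction algebra equals 1.) -/
open Polynomial Finset

theorem stmt_6 (K : Type*) [Field K] (l : ℕ) (hl : 1 ≤ l) (θ : ℕ → K)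
    (hθ : ∀ j ∈ Finset.Icc 1 l, ∀ k ∈ Finset.Icc 1 l, j ≠ k → θ j ≠ θ k) :
    (∏ j ∈ Finset.Icc 1 (l - 1), (θ j - θ l - 1) / (θ j - θ l)) +
      ∑ k ∈ Finset.Icc 1 (l - 1), (1 / (θ k - θ l)) *
        ∏ j ∈ (Finset.Icc 1 (l - 1)).erase k, (θ j - θ k - 1) / (θ j - θ k) = 1 := by
  set s := Finset.Icc 1 (l - 1) with hs
  have hsub : ∀ j ∈ s, j ∈ Finset.Icc 1 l := by
    intro j hj; rw [Finset.mem_Icc] at hj ⊢; omega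
  have hne : ∀ j ∈ s, ∀ k ∈ s, j ≠ k → θ j ≠ θ k :=
    fun j hj k hk h => hθ j (hsub j hj) k (hsub k hk) h
  have hnel : ∀ j ∈ s, θ j ≠ θ l := by
    intro j hj
    refine hθ j (hsub j hj) l (by rw [Finset.mem_Icc]; omega) ?_
    rw [Finset.mem_Icc] at hj; omega
  have hinj : Set.InjOn θ s := by
    intro a ha b hb hab
    by_contra h
    exact hne a ha b hb h hab
  -- the two polynomials
  set P1 : K[X] := ∏ j ∈ s, (X - C (θ j - 1)) with hP1
  set P2 : K[X] := ∏ j ∈ s, (X - C (θ j)) with hP2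
  have hm1 : P1.Monic := monic_prod_of_monic _ _ (fun j _ => monic_X_sub_C _)
  have hm2 : P2.Monic := monic_prod_of_monic _ _ (fun j _ => monic_X_sub_C _)
  have hd1 : P1.degree = (s.card : ℕ) := by
    rw [hP1, degree_prod, Finset.sum_congr rfl fun j _ => degree_X_sub_C (θ j - 1)]
    simp
  have hd2 : P2.degree = (s.card : ℕ) := by
    rw [hP2, degree_prod, Finset.sum_congr rfl fun j _ => degree_X_sub_C (θ j)]
    simp
  have hflt : (P1 - P2).degree < (s.card : ℕ) := by
    refine lt_of_lt_of_le (degree_sub_lt (hd1.trans hd2.symm) hm1.ne_zero ?_) (le_of_eq hd1)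
    rw [hm1.leadingCoeff, hm2.leadingCoeff]
  have key := Lagrange.eq_interpolate (v := θ) hinj hflt
  have H := congrArg (Polynomial.eval (θ l)) key
  rw [Lagrange.interpolate_apply] at H
  simp only [eval_finset_sum, eval_mul, eval_C, eval_sub, eval_prod, eval_X,
    Lagrange.basis, Lagrange.basisDivisor, eval_mul, eval_prod, eval_sub, eval_C, eval_X] at H
  have e1 : ∀ x : K, Polynomial.eval x P1 = ∏ j ∈ s, (x - θ j + 1) := by
    intro x
    rw [hP1, eval_prod]
    refine Finset.prod_congr rfl fun j _ => ?_
    simp only [eval_sub, eval_X, eval_C]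
    ring
  have e2 : ∀ x : K, Polynomial.eval x P2 = ∏ j ∈ s, (x - θ j) := by
    intro x
    rw [hP2, eval_prod]
    simp
  have e2z : ∀ k ∈ s, Polynomial.eval (θ k) P2 = 0 := fun k hk => by
    rw [e2]; exact Finset.prod_eq_zero hk (sub_self _)
  have e1e : ∀ k ∈ s, Polynomial.eval (θ k) P1 = ∏ j ∈ s.erase k, (θ k - θ j + 1) := by
    intro k hk
    rw [e1, ← Finset.mul_prod_erase s _ hk]
    simp
  rw [e1, e2, Finset.sum_congr rfl (fun k hk => by rw [e1e k hk, e2z k hk, sub_zero])] at H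
  have hDl : (∏ j ∈ s, (θ l - θ j)) ≠ 0 :=
    Finset.prod_ne_zero_iff.mpr fun j hj => sub_ne_zero.2 fun h => hnel j hj h.symm
  have flip : ∀ a b : K, (a - b - 1) / (a - b) = (b - a + 1) / (b - a) := by
    intro a b
    rw [show b - a + 1 = -(a - b - 1) by ring, show b - a = -(a - b) by ring, neg_div_neg_eq]
  rw [Finset.prod_congr rfl (fun j _ => flip (θ j) (θ l)),
      Finset.sum_congr rfl (fun k hk => by
        rw [Finset.prod_congr rfl (fun j _ => flip (θ j) (θ k))])]
  rw [Finset.prod_div_distrib]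
  refine mul_right_cancel₀ hDl ?_
  rw [one_mul, add_mul, div_mul_cancel₀ _ hDl, Finset.sum_mul]
  have step : ∀ k ∈ s, (1/(θ k - θ l) * ∏ j ∈ s.erase k, (θ k - θ j + 1)/(θ k - θ j)) * ∏ j ∈ s, (θ l - θ j)
      = -((∏ j ∈ s.erase k, (θ k - θ j + 1)) * ∏ j ∈ s.erase k, ((θ k - θ j)⁻¹ * (θ l - θ j))) := by
    intro k hk
    rw [← Finset.mul_prod_erase s _ hk, Finset.prod_div_distrib, Finset.prod_mul_distrib]
    have hc : θ k - θ l ≠ 0 := sub_ne_zero.2 (hnel k hk)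
    have hB : (∏ x ∈ s.erase k, (θ k - θ x)) ≠ 0 :=
      Finset.prod_ne_zero_iff.mpr fun j hj => sub_ne_zero.2
        (hne k hk j (Finset.mem_of_mem_erase hj) (Ne.symm (Finset.ne_of_mem_erase hj)))
    rw [Finset.prod_inv_distrib]
    field_simp
    ring
  rw [Finset.sum_congr rfl step, Finset.sum_neg_distrib, ← H]
  ring
end

section
/- Let K be a field and θ_1, …, θ_n ∈ K elements such that θ_j − θ_k ∉ {0, 1} for all j ≠ k. Writing θ_{jk} := θ_j − θ_k, define lower triangular matrices M, N ∈ M_n(K) by: M_{ll} = ∏_{j=1}^{l−1} θ_{jl}/(θ_{jl} − 1); M_{lk} = −(1/(θ_{kl} − 1)) ∏_{j=1}^{k−1} θ_{jl}/(θ_{jl} − 1) for k < l; M_{lk} = 0 for k > l; N_{ll} = ∏_{j=1}^{l−1} (θ_{jl} − 1)/θ_{jl}; N_{lk} = (1/θ_{kl}) ∏_{j=1, j≠k}^{l−1} (θ_{jk} − 1)/θ_{jk} for k < l; N_{lk} = 0 for k > l. Then M·N = N·M = I_n. (M and N are the matrices of the mutually inverse changes of variables between the generators t_l and t°_l of the diagonal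 reduction algebra.) -/
open Finset

private lemma fin_image_Iio {n : ℕ} (k : Fin n) :
    (Finset.Iio k).image Fin.val = Finset.range (k : ℕ) := by
  ext x
  simp only [mem_image, mem_Iio, mem_range, Fin.lt_def]
  constructor
  · rintro ⟨j, hj, rfl⟩; exact hj
  · intro hx; exact ⟨⟨x, hx.trans k.isLt⟩, hx, rfl⟩

private lemma fin_prod_Iio {n : ℕ} {K : Type*} [CommMonoid K] (k : Fin n)
    (f : Fin n → K) (g : ℕ → K) (h : ∀ j : Fin n, f j = g (j : ℕ)) :
    ∏ j ∈ Finset.Iio k, f j = ∏ j ∈ Finset.range (k : ℕ), g j := by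
  rw [← fin_image_Iio k, Finset.prod_image (fun a _ b _ hab => Fin.val_injective hab)]
  exact Finset.prod_congr rfl fun j _ => h j

private lemma fin_prod_Iio_erase {n : ℕ} {K : Type*} [CommMonoid K] (k m : Fin n)
    (f : Fin n → K) (g : ℕ → K) (h : ∀ j : Fin n, f j = g (j : ℕ)) :
    ∏ j ∈ (Finset.Iio k).erase m, f j = ∏ j ∈ (Finset.range (k : ℕ)).erase (m : ℕ), g j := by
  rw [← fin_image_Iio k, ← Finset.image_erase Fin.val_injective,
    Finset.prod_image (fun a _ b _ hab => Fin.val_injective hab)]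
  exact Finset.prod_congr rfl fun j _ => h j

private lemma tele {K : Type*} [Field K] (F U : ℕ → K) (a b : ℕ) (hab : a ≤ b)
    (h : ∀ k, a ≤ k → k < b → U k = F (k + 1) - F k) :
    ∑ k ∈ Finset.Ico a b, U k = F b - F a := by
  induction b, hab using Nat.le_induction with
  | base => simp
  | succ b hab ih =>
    rw [Finset.sum_Ico_succ_top (by omega),
      ih (fun k hk1 hk2 => h k hk1 (by omega)), h b hab (by omega)]
    ring

private lemma key {K : Type*} [Field K] (a b : ℕ → K) (m L : ℕ) (hmL : m < L)
    (haL : a L = 0) (hab : ∀ j, b j - a j = -(a m))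
    (ha : ∀ j, j < L → a j ≠ 0 ∧ a j - 1 ≠ 0)
    (hb : ∀ j, m < j → j < L → b j ≠ 0) :
    ∑ k ∈ Finset.Ioc m L,
      (∏ j ∈ Finset.range k, a j / (a j - 1)) *
        (∏ j ∈ (Finset.range k).erase m, (b j - 1) / b j) / ((a k - 1) * b k)
    = (1 / (a m - 1)) * (∏ j ∈ Finset.range m, a j / (a j - 1)) *
        (∏ j ∈ Finset.range m, (b j - 1) / b j) := by
  obtain ⟨ham0, ham1⟩ := ha m hmL
  set P : ℕ → K := fun k => ∏ j ∈ Finset.range k, a j / (a j - 1) with hP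
  set Q : ℕ → K := fun k => ∏ j ∈ (Finset.range k).erase m, (b j - 1) / b j with hQ
  set U : ℕ → K := fun k => P k * Q k / ((a k - 1) * b k) with hU
  set F : ℕ → K := fun k => -(1 / a m) * P k * Q k with hF
  have hPsucc : ∀ k, P (k + 1) = P k * (a k / (a k - 1)) := by
    intro k; simp only [hP]; rw [Finset.prod_range_succ]
  have hQsucc : ∀ k, m < k → Q (k + 1) = Q k * ((b k - 1) / b k) := by
    intro k hk
    simp only [hQ]
    rw [Finset.range_add_one, Finset.erase_insert_of_ne (by omega),
      Finset.prod_insert (by simp)]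
    ring
  have hstep : ∀ k, m + 1 ≤ k → k < L → U k = F (k + 1) - F k := by
    intro k hk1 hk2
    obtain ⟨hak0, hak1⟩ := ha k hk2
    have hbk : b k ≠ 0 := hb k (by omega) hk2
    have hbkeq : b k = a k - a m := by linear_combination hab k
    simp only [hU, hF, hPsucc, hQsucc k (by omega)]
    rw [hbkeq] at hbk ⊢
    field_simp
    ring
  have hIoc : Finset.Ioc m L = Finset.Ico (m + 1) (L + 1) := by
    ext x; simp [Nat.lt_succ_iff]
  rw [hIoc, Finset.sum_Ico_succ_top (by omega), tele F U (m + 1) L (by omega) hstep]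
  have hbL : b L = -(a m) := by linear_combination (hab L) + haL
  have hQm1 : Q (m + 1) = ∏ j ∈ Finset.range m, (b j - 1) / b j := by
    simp only [hQ]; rw [Finset.range_add_one, Finset.erase_insert (by simp)]
  have hPm1 : P (m + 1) = P m * (a m / (a m - 1)) := hPsucc m
  simp only [hU, hF, haL, hbL, hQm1, hPm1]
  have hc : (1 / a m) * (a m / (a m - 1)) = 1 / (a m - 1) := by field_simp
  have e1 : P L * Q L / ((0 - 1 : K) * -(a m)) = 1 / a m * (P L * Q L) := by
    rw [show ((0 : K) - 1) * -(a m) = a m by ring, div_eq_mul_inv, one_div]; ring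
  rw [e1]
  linear_combination (P m * ∏ j ∈ Finset.range m, (b j - 1) / b j) * hc

set_option maxHeartbeats 1600000

theorem stmt_7 (K : Type*) [Field K] (n : ℕ) (hn : 1 ≤ n) (θ : Fin n → K)
    (hθ : ∀ j k : Fin n, j ≠ k → θ j - θ k ≠ 0 ∧ θ j - θ k ≠ 1)
    (M N : Matrix (Fin n) (Fin n) K)
    (hM : ∀ l k : Fin n, M l k =
      if k = l then ∏ j ∈ Finset.Iio l, (θ j - θ l) / (θ j - θ l - 1)
      else if (k : ℕ) < (l : ℕ) then
        -(1 / (θ k - θ l - 1)) * ∏ j ∈ Finset.Iio k, (θ j - θ l) / (θ j - θ l - 1)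
      else 0)
    (hN : ∀ l k : Fin n, N l k =
      if k = l then ∏ j ∈ Finset.Iio l, (θ j - θ l - 1) / (θ j - θ l)
      else if (k : ℕ) < (l : ℕ) then
        (1 / (θ k - θ l)) * ∏ j ∈ (Finset.Iio l).erase k, (θ j - θ k - 1) / (θ j - θ k)
      else 0) :
    M * N = 1 ∧ N * M = 1 := by
  suffices h : M * N = 1 by exact ⟨h, mul_eq_one_comm.mp h⟩
  ext l m
  rw [Matrix.mul_apply, Matrix.one_apply]
  by_cases hlm : l = m
  · -- diagonal case
    subst hlm
    rw [if_pos rfl]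
    rw [Finset.sum_eq_single l]
    · rw [hM l l, hN l l, if_pos rfl, if_pos rfl, ← Finset.prod_mul_distrib]
      apply Finset.prod_eq_one
      intro j hj
      have hj' : j ≠ l := ne_of_lt (Finset.mem_Iio.mp hj)
      obtain ⟨h0, h1⟩ := hθ j l hj'
      have h1' : θ j - θ l - 1 ≠ 0 := by
        intro hc; exact h1 (by linear_combination hc)
      field_simp
    · intro k _ hk
      rcases lt_or_gt_of_ne hk with h | h
      · rw [hN k l, if_neg (Ne.symm hk), if_neg (by simpa using not_lt.mpr (le_of_lt h)),
          mul_zero]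
      · rw [hM l k, if_neg hk, if_neg (by simpa using not_lt.mpr (le_of_lt h)), zero_mul]
    · intro h; exact absurd (Finset.mem_univ l) h
  · -- off-diagonal
    rw [if_neg hlm]
    by_cases hlt : (m : ℕ) < (l : ℕ)
    swap
    · -- l < m : all terms vanish
      apply Finset.sum_eq_zero
      intro k _
      have hml : (l : ℕ) < (m : ℕ) := by
        rcases lt_or_gt_of_ne (fun h => hlm (Fin.val_injective h) : (l:ℕ) ≠ (m:ℕ)) with h | h
        · exact h
        · exact absurd h hlt
      by_cases hk : (k : ℕ) ≤ (l : ℕ)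
      · have h1 : m ≠ k := by intro h; rw [h] at hml; omega
        rw [hN k m, if_neg h1, if_neg (by omega), mul_zero]
      · rw [hM l k, if_neg (fun h => hk (le_of_eq (congrArg Fin.val h))),
          if_neg (by omega), zero_mul]
    · -- main case : m < l
      set a : ℕ → K := fun j => (if h : j < n then θ ⟨j, h⟩ else 0) - θ l with ha
      set b : ℕ → K := fun j => (if h : j < n then θ ⟨j, h⟩ else 0) - θ m with hb
      have haj : ∀ j : Fin n, a (j : ℕ) = θ j - θ l := by
        intro j; simp [ha, j.isLt]
      have hbj : ∀ j : Fin n, b (j : ℕ) = θ j - θ m := by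
        intro j; simp [hb, j.isLt]
      have haL0 : a (l : ℕ) = 0 := by rw [haj l]; ring
      have habj : ∀ j, b j - a j = -(a (m : ℕ)) := by
        intro j; rw [haj m]; simp only [ha, hb]; ring
      have hane : ∀ j, j < (l : ℕ) → a j ≠ 0 ∧ a j - 1 ≠ 0 := by
        intro j hj
        have hjn : j < n := hj.trans l.isLt
        have hjl : (⟨j, hjn⟩ : Fin n) ≠ l := by
          intro hc; rw [Fin.ext_iff, Fin.val_mk] at hc; omega
        obtain ⟨h0, h1⟩ := hθ ⟨j, hjn⟩ l hjl
        rw [show a j = θ ⟨j, hjn⟩ - θ l from haj ⟨j, hjn⟩]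
        exact ⟨h0, fun hc => h1 (by linear_combination hc)⟩
      have hbne : ∀ j, (m : ℕ) < j → j < (l : ℕ) → b j ≠ 0 := by
        intro j hj1 hj2
        have hjn : j < n := hj2.trans l.isLt
        have hjm : (⟨j, hjn⟩ : Fin n) ≠ m := by
          intro hc; rw [Fin.ext_iff, Fin.val_mk] at hc; omega
        rw [show b j = θ ⟨j, hjn⟩ - θ m from hbj ⟨j, hjn⟩]
        exact (hθ ⟨j, hjn⟩ m hjm).1
      set G : ℕ → K := fun k =>
        if k = (m : ℕ) then
          -((1 / (a (m : ℕ) - 1)) * (∏ j ∈ Finset.range (m : ℕ), a j / (a j - 1)) *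
            (∏ j ∈ Finset.range (m : ℕ), (b j - 1) / b j))
        else if (m : ℕ) < k ∧ k ≤ (l : ℕ) then
          (∏ j ∈ Finset.range k, a j / (a j - 1)) *
            (∏ j ∈ (Finset.range k).erase (m : ℕ), (b j - 1) / b j) / ((a k - 1) * b k)
        else 0 with hG
      have hMN : ∀ k : Fin n, M l k * N k m = G (k : ℕ) := by
        intro k
        rcases lt_trichotomy (k : ℕ) (m : ℕ) with hkm | hkm | hkm
        · have h1 : m ≠ k := by intro h; rw [h] at hkm; omega
          rw [hN k m, if_neg h1, if_neg (by omega), mul_zero]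
          simp only [hG]
          rw [if_neg (by omega), if_neg (by omega)]
        · -- k = m
          have hk' : k = m := Fin.ext hkm
          subst hk'
          rw [hM l k, hN k k, if_neg (by intro h; rw [h] at hlt; omega : ¬ k = l),
            if_pos hlt, if_pos rfl]
          simp only [hG]
          rw [if_pos (by trivial),
            fin_prod_Iio k (fun j => (θ j - θ l) / (θ j - θ l - 1))
              (fun j => a j / (a j - 1)) (fun j => by simp only [haj]),
            fin_prod_Iio k (fun j => (θ j - θ k - 1) / (θ j - θ k))
              (fun j => (b j - 1) / b j) (fun j => by simp only [hbj]),
            show θ k - θ l - 1 = a (k : ℕ) - 1 by rw [haj k]]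
          ring
        · -- k > m
          by_cases hkl : (k : ℕ) < (l : ℕ)
          · -- m < k < l
            have hkm' : m ≠ k := by intro h; rw [h] at hkm; omega
            have hkl' : ¬ k = l := by intro h; rw [h] at hkl; omega
            rw [hM l k, hN k m, if_neg hkl', if_pos hkl, if_neg hkm', if_pos hkm]
            simp only [hG]
            rw [if_neg (by omega), if_pos ⟨hkm, le_of_lt hkl⟩,
              fin_prod_Iio k (fun j => (θ j - θ l) / (θ j - θ l - 1))
                (fun j => a j / (a j - 1)) (fun j => by simp only [haj]),
              fin_prod_Iio_erase k m (fun j => (θ j - θ m - 1) / (θ j - θ m))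
                (fun j => (b j - 1) / b j) (fun j => by simp only [hbj])]
            obtain ⟨ha0, ha1⟩ := hane (k : ℕ) hkl
            have hb0 := hbne (k : ℕ) hkm hkl
            rw [show θ k - θ l - 1 = a (k : ℕ) - 1 by rw [haj k],
              show θ m - θ k = -(b (k : ℕ)) by rw [hbj k]; ring]
            field_simp
          · by_cases hkL : (k : ℕ) = (l : ℕ)
            · -- k = l
              have hk' : k = l := Fin.ext hkL
              subst hk'
              rw [hM k k, hN k m, if_pos rfl,
                if_neg (by intro h; rw [h] at hkm; omega : ¬ m = k), if_pos hkm]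
              simp only [hG]
              rw [if_neg (by omega), if_pos ⟨hkm, le_refl _⟩,
                fin_prod_Iio k (fun j => (θ j - θ k) / (θ j - θ k - 1))
                  (fun j => a j / (a j - 1)) (fun j => by simp only [haj]),
                fin_prod_Iio_erase k m (fun j => (θ j - θ m - 1) / (θ j - θ m))
                  (fun j => (b j - 1) / b j) (fun j => by simp only [hbj]),
                haL0]
              rw [show θ m - θ k = -(b (k : ℕ)) by rw [hbj k]; ring,
                show ((0 : K) - 1) * b (k : ℕ) = -(b (k : ℕ)) from by ring,
                one_div, inv_neg, div_neg, div_eq_mul_inv]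
              ring
            · rw [hM l k, if_neg (by intro h; rw [h] at hkL; exact hkL rfl : ¬ k = l),
                if_neg (by omega), zero_mul]
              simp only [hG]
              rw [if_neg (by omega), if_neg (by omega)]
      calc ∑ k : Fin n, M l k * N k m = ∑ k : Fin n, G (k : ℕ) :=
            Finset.sum_congr rfl fun k _ => hMN k
        _ = ∑ k ∈ Finset.range n, G k := Fin.sum_univ_eq_sum_range G n
        _ = ∑ k ∈ Finset.Icc (m : ℕ) (l : ℕ), G k := by
            refine (Finset.sum_subset ?_ ?_).symm
            · intro x hx
              rw [Finset.mem_Icc] at hx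
              exact Finset.mem_range.mpr (lt_of_le_of_lt hx.2 l.isLt)
            · intro x _ hx
              rw [Finset.mem_Icc] at hx
              simp only [hG]
              rw [if_neg (by omega), if_neg (by omega)]
        _ = 0 := by
            rw [← Finset.Ioc_insert_left (le_of_lt hlt), Finset.sum_insert (by simp)]
            have hIoc : ∀ k ∈ Finset.Ioc (m : ℕ) (l : ℕ), G k =
                (∏ j ∈ Finset.range k, a j / (a j - 1)) *
                  (∏ j ∈ (Finset.range k).erase (m : ℕ), (b j - 1) / b j) /
                    ((a k - 1) * b k) := by
              intro k hk
              rw [Finset.mem_Ioc] at hk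
              simp only [hG]
              rw [if_neg (by omega), if_pos ⟨hk.1, hk.2⟩]
            rw [Finset.sum_congr rfl hIoc,
              key a b (m : ℕ) (l : ℕ) hlt haL0 habj hane hbne]
            simp only [hG]
            rw [if_pos (by trivial)]
            ring
end

section
/- Let K be a field, n ≥ 1, and let θ_1, …, θ_n ∈ K be pairwise distinct. Writing θ_{jk} := θ_j − θ_k, for every k ∈ {1, …, n} the following identity holds: ∏_{j=1}^{k−1} (θ_{jk} − 1)/θ_{jk} + Σ_{l=k+1}^{n} (1/θ_{kl}) · ∏_{j=1, j≠k}^{l−1} (θ_{jk} − 1)/θ_{jk} = ∏_{a=1, a≠k}^{n} (θ_{ka} + 1)/θ_{ka}. (This is the identity expressing the linear central element Σ_i t_i of the diagonal reduction algebra in the new generators: Σ_i t_i = Σ_i t°_i ∏_{a≠i} (θ_{ia}+1)/θ_{ia}.) -/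
private lemma aux_19 (K : Type*) [Field K] (θ : ℕ → K) (k : ℕ) :
    ∀ m, k ≤ m → (∀ l, k < l → l ≤ m → θ k ≠ θ l) →
    (∏ j ∈ Finset.Icc 1 (k - 1), (θ j - θ k - 1) / (θ j - θ k)) +
      ∑ l ∈ Finset.Icc (k + 1) m, (1 / (θ k - θ l)) *
        ∏ j ∈ (Finset.Icc 1 (l - 1)).erase k, (θ j - θ k - 1) / (θ j - θ k)
    = ∏ a ∈ (Finset.Icc 1 m).erase k, (θ a - θ k - 1) / (θ a - θ k) := by
  intro m hm
  induction m, hm using Nat.le_induction with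
  | base =>
    intro _h
    rw [show Finset.Icc (k+1) k = ∅ by simp, Finset.sum_empty, add_zero]
    have : (Finset.Icc 1 k).erase k = Finset.Icc 1 (k - 1) := by
      ext x
      simp only [Finset.mem_erase, Finset.mem_Icc]
      omega
    rw [this]
  | succ m hm ih =>
    intro h
    have hθne : θ k ≠ θ (m+1) := h (m+1) (by omega) le_rfl
    have hne : θ (m+1) - θ k ≠ 0 := sub_ne_zero.mpr (Ne.symm hθne)
    have hne' : θ k - θ (m+1) ≠ 0 := sub_ne_zero.mpr hθne
    have h1 : Finset.Icc (k+1) (m+1) = insert (m+1) (Finset.Icc (k+1) m) := by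
      ext x
      simp only [Finset.mem_Icc, Finset.mem_insert]
      omega
    have h2 : (Finset.Icc 1 (m+1)).erase k = insert (m+1) ((Finset.Icc 1 m).erase k) := by
      ext x
      simp only [Finset.mem_erase, Finset.mem_Icc, Finset.mem_insert]
      omega
    rw [h1, Finset.sum_insert (by simp), h2,
      Finset.prod_insert (by simp)]
    have := ih (fun l hl hl' => h l hl (by omega))
    simp only [Nat.add_sub_cancel] at *
    rw [← add_assoc, add_comm _ ((1 / (θ k - θ (m+1))) * _), add_assoc, this]
    rw [← add_one_mul]
    congr 1
    field_simp
    ring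

theorem stmt_19 (K : Type*) [Field K] (n : ℕ) (hn : 1 ≤ n) (θ : ℕ → K)
    (hθ : ∀ j ∈ Finset.Icc 1 n, ∀ k ∈ Finset.Icc 1 n, j ≠ k → θ j ≠ θ k)
    (k : ℕ) (hk : k ∈ Finset.Icc 1 n) :
    (∏ j ∈ Finset.Icc 1 (k - 1), (θ j - θ k - 1) / (θ j - θ k)) +
      ∑ l ∈ Finset.Icc (k + 1) n, (1 / (θ k - θ l)) *
        ∏ j ∈ (Finset.Icc 1 (l - 1)).erase k, (θ j - θ k - 1) / (θ j - θ k)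
    = ∏ a ∈ (Finset.Icc 1 n).erase k, (θ k - θ a + 1) / (θ k - θ a) := by
  simp only [Finset.mem_Icc] at hk
  have hR : ∀ a ∈ (Finset.Icc 1 n).erase k,
      (θ k - θ a + 1) / (θ k - θ a) = (θ a - θ k - 1) / (θ a - θ k) := by
    intro a _
    rw [show θ k - θ a + 1 = -(θ a - θ k - 1) by ring,
        show θ k - θ a = -(θ a - θ k) by ring, neg_div_neg_eq]
  rw [Finset.prod_congr rfl hR]
  exact aux_19 K θ k n hk.2 (fun l hl hl' =>
    hθ k (by simp only [Finset.mem_Icc]; omega) l (by simp only [Finset.mem_Icc]; omega)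
      (by omega))
end
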